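/- Let M_1, …, M_n ∈ SE(3) be represented as 4×4 homogeneous matrices and let M ∈ ℝ^{4n×4} be their vertical stack. Let U ∈ ℝ^{4n×4} have column space equal to the column space of M, let PU ∈ ℝ^{n×4} be the matrix formed by the rows of U with index a multiple of four, let α_1, α_2, α_3 ∈ ℝ⁴ be a basis of the null space of PU, and let β ∈ ℝ⁴ satisfy PU·β = 1 (the all-ones vector). Then the matrix U·[α_1 α_2 α_3 β] ∈ ℝ^{4n×4} has every row of index a multiple of four equal to [0 0 0 1], and its column space equals the column space of M; equivalently, there exists an invertible C ∈ ℝ^{4×4} of the block form [[B, w],[0ᵀ,1]] with B ∈ ℝ^{3×3} invertible and w ∈ ℝ³ such that U·[α_1 α_2 α_3 β] = M·C. -/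

import Mathlib

open Matrix

noncomputable section

/-- Index type for 4×4 homogeneous matrices. -/
abbrev Idx4 : Type := Fin 3 ⊕ Fin 1

/-- The 4×4 homogeneous matrix `[[R, t],[0,1]]`. -/
def homog (R : Matrix (Fin 3) (Fin 3) ℝ) (t : Fin 3 → ℝ) : Matrix Idx4 Idx4 ℝ :=
  Matrix.fromBlocks R (Matrix.of fun i (_ : Fin 1) => t i) 0 1

/-- `A` is an SE(3) element written as a 4×4 homogeneous matrix. -/
def IsSE3 (A : Matrix Idx4 Idx4 ℝ) : Prop :=
  ∃ (R : Matrix (Fin 3) (Fin 3) ℝ) (t : Fin 3 → ℝ),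
    Rᵀ * R = 1 ∧ R.det = 1 ∧ A = homog R t

lemma span_cols_mul_le {m : Type*} [Fintype m] (A : Matrix m Idx4 ℝ) (C : Matrix Idx4 Idx4 ℝ) :
    Submodule.span ℝ (Set.range fun c : Idx4 => fun p : m => (A * C) p c)
      ≤ Submodule.span ℝ (Set.range fun c : Idx4 => fun p : m => A p c) := by
  rw [Submodule.span_le]
  rintro _ ⟨c, rfl⟩
  rw [SetLike.mem_coe, Submodule.mem_span_range_iff_exists_fun ℝ]
  refine ⟨fun j => C j c, ?_⟩
  funext p
  simp [Finset.sum_apply, Matrix.mul_apply, mul_comm]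

lemma exists_factor {m : Type*} [Fintype m] (A B : Matrix m Idx4 ℝ)
    (h : Submodule.span ℝ (Set.range fun c : Idx4 => fun p : m => A p c)
        ≤ Submodule.span ℝ (Set.range fun c : Idx4 => fun p : m => B p c)) :
    ∃ D : Matrix Idx4 Idx4 ℝ, A = B * D := by
  have hc : ∀ c : Idx4, ∃ f : Idx4 → ℝ,
      ∑ j, f j • (fun p : m => B p j) = fun p : m => A p c := by
    intro c
    exact (Submodule.mem_span_range_iff_exists_fun ℝ).mp
      (h (Submodule.subset_span ⟨c, rfl⟩))
  choose f hf using hc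
  refine ⟨Matrix.of fun j c => f c j, ?_⟩
  ext p c
  have h1 := congrFun (hf c) p
  simp only [Finset.sum_apply, Pi.smul_apply, smul_eq_mul] at h1
  simp [Matrix.mul_apply, ← h1, mul_comm]

/-- with `α_1, α_2, α_3` a basis of the null space of `PU` and `β`
solving `PU·β = 1`, the matrix `U·[α_1 α_2 α_3 β]` has every fourth row equal to
`[0 0 0 1]` and its column space equals that of `M`; equivalently it equals `M·C`
for an invertible `C = [[B, w],[0,1]]` with `B` invertible. -/
theorem recovering_euclidean_basis
    (n : ℕ) (hn : 1 ≤ n)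
    (Ms : Fin n → Matrix Idx4 Idx4 ℝ) (hMs : ∀ i, IsSE3 (Ms i))
    (M : Matrix (Fin n × Idx4) Idx4 ℝ)
    (hM : ∀ i r c, M (i, r) c = Ms i r c)
    (U : Matrix (Fin n × Idx4) Idx4 ℝ)
    (hU : Submodule.span ℝ (Set.range fun c : Idx4 => fun p : Fin n × Idx4 => U p c)
        = Submodule.span ℝ (Set.range fun c : Idx4 => fun p : Fin n × Idx4 => M p c))
    (PU : Matrix (Fin n) Idx4 ℝ)
    (hPU : ∀ i c, PU i c = U (i, Sum.inr 0) c)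
    (α : Fin 3 → (Idx4 → ℝ))
    (hαind : LinearIndependent ℝ α)
    (hαspan : Submodule.span ℝ (Set.range α) = LinearMap.ker PU.mulVecLin)
    (β : Idx4 → ℝ) (hβ : PU.mulVec β = fun _ => (1 : ℝ))
    (C0 : Matrix Idx4 Idx4 ℝ)
    (hC0 : ∀ r c, C0 r c = Sum.elim (fun k : Fin 3 => α k r) (fun _ : Fin 1 => β r) c) :
    (∀ (i : Fin n) (c : Idx4),
        (U * C0) (i, Sum.inr 0) c = Sum.elim (fun _ : Fin 3 => (0 : ℝ)) (fun _ => 1) c) ∧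
      Submodule.span ℝ (Set.range fun c : Idx4 => fun p : Fin n × Idx4 => (U * C0) p c)
        = Submodule.span ℝ (Set.range fun c : Idx4 => fun p : Fin n × Idx4 => M p c) ∧
      ∃ (B : Matrix (Fin 3) (Fin 3) ℝ) (w : Fin 3 → ℝ),
        IsUnit B.det ∧
        U * C0 = M * Matrix.fromBlocks B (Matrix.of fun i (_ : Fin 1) => w i) 0 1 := by
  classical
  set i0 : Fin n := ⟨0, hn⟩ with hi0
  -- bottom rows of the SE(3) blocks
  have hbot : ∀ (i : Fin n) (j : Idx4),
      Ms i (Sum.inr 0) j = Sum.elim (fun _ : Fin 3 => (0 : ℝ)) (fun _ => 1) j := by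
    intro i j
    obtain ⟨R, t, -, -, hA⟩ := hMs i
    rw [hA]
    cases j with
    | inl j => simp [homog]
    | inr j =>
      have : j = 0 := Subsingleton.elim _ _
      subst this
      simp [homog, Matrix.one_apply]
  -- every fourth row of M * C equals the bottom row of C
  have hrow : ∀ (C : Matrix Idx4 Idx4 ℝ) (i : Fin n) (c : Idx4),
      (M * C) (i, Sum.inr 0) c = C (Sum.inr 0) c := by
    intro C i c
    rw [Matrix.mul_apply, Fintype.sum_sum_type]
    simp [hM, hbot]
  -- each Ms i is invertible
  have hMsUnit : ∀ i, IsUnit (Ms i).det := by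
    intro i
    obtain ⟨R, t, -, hdet, hA⟩ := hMs i
    rw [hA, homog, Matrix.det_fromBlocks_zero₂₁, hdet]
    simp
  -- M has injective mulVec
  have hMinj : Function.Injective M.mulVec := by
    intro x y hxy
    have h1 : (Ms i0).mulVec x = (Ms i0).mulVec y := by
      funext r
      have h2 := congrFun hxy (i0, r)
      simpa [Matrix.mulVec, dotProduct, hM] using h2
    exact (Matrix.mulVec_injective_iff_isUnit.mpr
      ((Matrix.isUnit_iff_isUnit_det _).mpr (hMsUnit i0))) h1
  have cancelM : ∀ A B : Matrix Idx4 Idx4 ℝ, M * A = M * B → A = B := by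
    intro A B hAB
    ext j c
    have h1 : M.mulVec (fun j => A j c) = M.mulVec (fun j => B j c) := by
      funext p
      simpa [Matrix.mulVec, dotProduct, Matrix.mul_apply] using
        congrFun (congrFun hAB p) c
    exact congrFun (hMinj h1) j
  -- factor U = M * D with D invertible
  obtain ⟨D, hUD⟩ := exists_factor U M hU.le
  obtain ⟨E, hME⟩ := exists_factor M U hU.ge
  have hDE : D * E = 1 := by
    apply cancelM
    rw [Matrix.mul_one, ← Matrix.mul_assoc, ← hUD, ← hME]
  have hDdet : IsUnit D.det := Matrix.isUnit_det_of_right_inverse hDE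
  -- the rows of PU are all equal to the bottom row of D
  have hPUd : ∀ i c, PU i c = D (Sum.inr 0) c := by
    intro i c
    rw [hPU, hUD, hrow]
  -- d ⬝ α k = 0 and d ⬝ β = 1
  have hαker : ∀ k, PU.mulVec (α k) = 0 := by
    intro k
    have h1 : α k ∈ LinearMap.ker PU.mulVecLin := by
      rw [← hαspan]
      exact Submodule.subset_span ⟨k, rfl⟩
    simpa [Matrix.mulVecLin_apply] using LinearMap.mem_ker.mp h1
  have hdα : ∀ k, ∑ j, D (Sum.inr 0) j * α k j = 0 := by
    intro k
    have h1 := congrFun (hαker k) i0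
    simpa [Matrix.mulVec, dotProduct, hPUd] using h1
  have hdβ : ∑ j, D (Sum.inr 0) j * β j = 1 := by
    have h1 := congrFun hβ i0
    simpa [Matrix.mulVec, dotProduct, hPUd] using h1
  -- C := D * C0 ; its bottom row is [0 0 0 1]
  set C : Matrix Idx4 Idx4 ℝ := D * C0 with hC
  have hCbot : ∀ c, C (Sum.inr 0) c = Sum.elim (fun _ : Fin 3 => (0 : ℝ)) (fun _ => 1) c := by
    intro c
    cases c with
    | inl k =>
      have : C (Sum.inr 0) (Sum.inl k) = ∑ j, D (Sum.inr 0) j * α k j := by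
        rw [hC, Matrix.mul_apply]
        refine Finset.sum_congr rfl fun j _ => ?_
        rw [hC0]
        rfl
      rw [this, hdα]
      rfl
    | inr r =>
      have hr : r = 0 := Subsingleton.elim _ _
      subst hr
      have : C (Sum.inr 0) (Sum.inr 0) = ∑ j, D (Sum.inr 0) j * β j := by
        rw [hC, Matrix.mul_apply]
        refine Finset.sum_congr rfl fun j _ => ?_
        rw [hC0]
        rfl
      rw [this, hdβ]
      rfl
  -- C0 is invertible
  have hβne : β ≠ 0 := by
    intro h
    rw [h] at hdβ
    simp at hdβ
  have hcols : (fun c : Idx4 => C0ᵀ c) = Sum.elim α (fun _ : Fin 1 => β) := by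
    funext c
    cases c with
    | inl k => funext r; rw [Matrix.transpose_apply, hC0]; rfl
    | inr r => funext j; rw [Matrix.transpose_apply, hC0]; rfl
  have hdisj : Disjoint (Submodule.span ℝ (Set.range α))
      (Submodule.span ℝ (Set.range fun _ : Fin 1 => β)) := by
    rw [Submodule.disjoint_def]
    intro x hx hxβ
    have hker : PU.mulVec x = 0 := by
      rw [hαspan] at hx
      simpa [Matrix.mulVecLin_apply] using LinearMap.mem_ker.mp hx
    have hx0 : ∑ c, D (Sum.inr 0) c * x c = 0 := by
      have h1 := congrFun hker i0
      simpa [Matrix.mulVec, dotProduct, hPUd] using h1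
    rw [Set.range_const] at hxβ
    obtain ⟨b, rfl⟩ := Submodule.mem_span_singleton.mp hxβ
    have hb : b = 0 := by
      have : ∑ c, D (Sum.inr 0) c * (b • β) c = b := by
        have h2 : ∀ c, D (Sum.inr 0) c * (b • β) c = b * (D (Sum.inr 0) c * β c) := by
          intro c; simp only [Pi.smul_apply, smul_eq_mul]; ring
        rw [Finset.sum_congr rfl fun c _ => h2 c, ← Finset.mul_sum, hdβ, mul_one]
      rw [hx0] at this
      exact this.symm
    rw [hb, zero_smul]
  have hβind : LinearIndependent ℝ (fun _ : Fin 1 => β) :=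
    linearIndependent_unique_iff.mpr hβne
  have hC0unit : IsUnit C0 := by
    rw [← Matrix.linearIndependent_cols_iff_isUnit]
    change LinearIndependent ℝ (fun c : Idx4 => C0ᵀ c)
    rw [hcols]
    exact hαind.sum_type hβind hdisj
  have hC0det : IsUnit C0.det := (Matrix.isUnit_iff_isUnit_det _).mp hC0unit
  have hCdet : IsUnit C.det := by
    rw [hC, Matrix.det_mul]
    exact hDdet.mul hC0det
  -- assemble the block form
  set B : Matrix (Fin 3) (Fin 3) ℝ := Matrix.of fun i j => C (Sum.inl i) (Sum.inl j) with hB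
  set w : Fin 3 → ℝ := fun i => C (Sum.inl i) (Sum.inr 0) with hw
  have hCblock : C = Matrix.fromBlocks B (Matrix.of fun i (_ : Fin 1) => w i) 0 1 := by
    ext r c
    cases r with
    | inl i =>
      cases c with
      | inl j => rfl
      | inr j =>
        have : j = 0 := Subsingleton.elim _ _
        subst this
        rfl
    | inr i =>
      have : i = 0 := Subsingleton.elim _ _
      subst this
      cases c with
      | inl j => simpa using hCbot (Sum.inl j)
      | inr j =>
        have : j = 0 := Subsingleton.elim _ _
        subst this
        simpa [Matrix.one_apply] using hCbot (Sum.inr 0)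
  have hBdet : IsUnit B.det := by
    have : C.det = B.det := by
      rw [hCblock, Matrix.det_fromBlocks_zero₂₁]
      simp
    rwa [this] at hCdet
  have hUC0 : U * C0 = M * C := by
    rw [hC, hUD, Matrix.mul_assoc]
  refine ⟨?_, ?_, B, w, hBdet, by rw [hUC0, hCblock]; rfl⟩
  · intro i c
    rw [hUC0, hrow, hCbot]
  · rw [hUC0]
    apply le_antisymm
    · exact span_cols_mul_le M C
    · have hM' : M = (M * C) * C⁻¹ := by
        rw [Matrix.mul_assoc, Matrix.mul_nonsing_inv C hCdet, Matrix.mul_one]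
      calc Submodule.span ℝ (Set.range fun c : Idx4 => fun p : Fin n × Idx4 => M p c)
          = Submodule.span ℝ
            (Set.range fun c : Idx4 => fun p : Fin n × Idx4 => ((M * C) * C⁻¹) p c) := by
            rw [← hM']
        _ ≤ _ := span_cols_mul_le (M * C) C⁻¹
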